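/- For every m with 1 < m < 2 there exists a constant κ_m > 0 such that for all vectors ξ, η in ℝ^N: |ξ - η|^m ≤ κ_m [(|ξ|^{m-2}ξ - |η|^{m-2}η) · (ξ - η)]^{m/2} (|ξ|^m + |η|^m)^{(2-m)/2}. -/

import Mathlib

open Real

private lemma simon_tangent_rpow {p a b : ℝ} (ha : 0 < a) (hb : 0 ≤ b) (hp0 : 0 ≤ p)
    (hp1 : p ≤ 1) : b ^ p ≤ a ^ p + p * a ^ (p - 1) * (b - a) := by
  have hs : -1 ≤ b / a - 1 := by
    have : 0 ≤ b / a := div_nonneg hb ha.le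
    linarith
  have h := rpow_one_add_le_one_add_mul_self hs hp0 hp1
  have hba : (1 + (b / a - 1)) = b / a := by ring
  rw [hba] at h
  have hap : (0:ℝ) < a ^ p := rpow_pos_of_pos ha p
  have key : b ^ p = (b / a) ^ p * a ^ p := by
    rw [div_rpow hb ha.le, div_mul_cancel₀]
    exact hap.ne'
  rw [key]
  refine (mul_le_mul_of_nonneg_right h hap.le).trans_eq ?_
  rw [show a ^ (p - 1) = a ^ p / a by rw [rpow_sub ha, rpow_one]]
  field_simp

private lemma simon_diff_pow_lb {m a b : ℝ} (hm1 : 1 < m) (hm2 : m < 2) (hb : 0 < b)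
    (hab : b ≤ a) : (m - 1) * (a - b) * (a + b) ^ (m - 2) ≤ a ^ (m - 1) - b ^ (m - 1) := by
  have ha : 0 < a := hb.trans_le hab
  have ht := simon_tangent_rpow (p := m - 1) ha hb.le (by linarith) (by linarith)
  have h1 : (a + b) ^ (m - 2) ≤ a ^ (m - 2) :=
    rpow_le_rpow_of_nonpos ha (by linarith) (by linarith)
  have h2 : (m - 1) * (a - b) * (a + b) ^ (m - 2) ≤ (m - 1) * (a - b) * a ^ (m - 2) := by
    apply mul_le_mul_of_nonneg_left h1
    nlinarith
  refine h2.trans ?_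
  have : m - 1 - 1 = m - 2 := by ring
  rw [this] at ht
  nlinarith

private lemma simon_dab_nonneg {m a b : ℝ} (hm1 : 1 < m) (hm2 : m < 2) (ha : 0 < a)
    (hb : 0 < b) :
    0 ≤ (a - b) * (a ^ (m-1) - b ^ (m-1)) - (m - 1) * (a - b)^2 * (a + b) ^ (m - 2) := by
  rcases le_total b a with h | h
  · have := simon_diff_pow_lb hm1 hm2 hb h
    nlinarith
  · have := simon_diff_pow_lb hm1 hm2 ha h
    rw [show b + a = a + b by ring] at this
    nlinarith

private lemma simon_scalar_key {m a b t : ℝ} (hm1 : 1 < m) (hm2 : m < 2) (ha : 0 < a)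
    (hb : 0 < b) (ht : t ≤ a * b) :
    (m - 1) * (a^2 + b^2 - 2*t) * (a + b) ^ (m - 2) ≤
      a ^ m + b ^ m - (a ^ (m-2) + b ^ (m-2)) * t := by
  have h1 : (a + b) ^ (m - 2) ≤ a ^ (m - 2) :=
    rpow_le_rpow_of_nonpos ha (by linarith) (by linarith)
  have h2 : (a + b) ^ (m - 2) ≤ b ^ (m - 2) :=
    rpow_le_rpow_of_nonpos hb (by linarith) (by linarith)
  have hpos : (0:ℝ) < (a + b) ^ (m - 2) := rpow_pos_of_pos (by linarith) _
  have hd := simon_dab_nonneg hm1 hm2 ha hb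
  have e1 : a ^ (m - 2) * a ^ 2 = a ^ m := by
    rw [← rpow_two, ← rpow_add ha]; ring_nf
  have e2 : b ^ (m - 2) * b ^ 2 = b ^ m := by
    rw [← rpow_two, ← rpow_add hb]; ring_nf
  have e3 : a ^ (m - 1) * b = a ^ (m - 2) * (a * b) := by
    rw [show m - 1 = m - 2 + 1 by ring, rpow_add ha, rpow_one]; ring
  have e4 : b ^ (m - 1) * a = b ^ (m - 2) * (a * b) := by
    rw [show m - 1 = m - 2 + 1 by ring, rpow_add hb, rpow_one]; ring
  have hbr : 0 ≤ (a ^ (m-2) + b ^ (m-2)) - 2*(m - 1)*(a + b) ^ (m - 2) := by nlinarith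
  have e5 : a ^ (m - 1) * a = a ^ m := by
    rw [← rpow_add_one ha.ne']; ring_nf
  have e6 : b ^ (m - 1) * b = b ^ m := by
    rw [← rpow_add_one hb.ne']; ring_nf
  nlinarith [mul_nonneg (sub_nonneg.2 ht) hbr, hd]

private lemma simon_add_rpow_le {m a b : ℝ} (hm : 0 < m) (ha : 0 ≤ a) (hb : 0 ≤ b) :
    (a + b) ^ m ≤ 2 ^ m * (a ^ m + b ^ m) := by
  have hmax : a + b ≤ 2 * max a b := by
    rcases le_total a b with h | h
    · simp [max_eq_right h]; linarith
    · simp [max_eq_left h]; linarith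
  have h1 : (a + b) ^ m ≤ (2 * max a b) ^ m :=
    rpow_le_rpow (by linarith) hmax hm.le
  have h2 : (2 * max a b) ^ m = 2 ^ m * (max a b) ^ m :=
    mul_rpow (by norm_num) (le_max_of_le_left ha)
  have h3 : (max a b) ^ m ≤ a ^ m + b ^ m := by
    rcases le_total a b with h | h
    · rw [max_eq_right h]
      have := rpow_nonneg ha m; linarith
    · rw [max_eq_left h]
      have := rpow_nonneg hb m; linarith
  calc (a + b) ^ m ≤ 2 ^ m * (max a b) ^ m := by rw [← h2]; exact h1
    _ ≤ 2 ^ m * (a ^ m + b ^ m) := by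
        apply mul_le_mul_of_nonneg_left h3 (by positivity)

private lemma simon_main_case (N : ℕ) (m : ℝ) (hm1 : 1 < m) (hm2 : m < 2)
    (ξ η : EuclideanSpace ℝ (Fin N)) (hξ : ξ ≠ 0) (hη : η ≠ 0) :
    ‖ξ - η‖ ^ m ≤
      (((m-1)⁻¹) ^ (m/2) * (2 ^ m) ^ ((2-m)/2))
        * (inner ℝ ((‖ξ‖ ^ (m - 2)) • ξ - (‖η‖ ^ (m - 2)) • η) (ξ - η) : ℝ) ^ (m / 2)
        * (‖ξ‖ ^ m + ‖η‖ ^ m) ^ ((2 - m) / 2) := by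
  have ha : 0 < ‖ξ‖ := norm_pos_iff.2 hξ
  have hb : 0 < ‖η‖ := norm_pos_iff.2 hη
  set a := ‖ξ‖ with hadef
  set b := ‖η‖ with hbdef
  have hm1' : (0:ℝ) < m - 1 := by linarith
  have e1 : a ^ (m - 2) * a ^ 2 = a ^ m := by
    rw [← rpow_two, ← rpow_add ha]; ring_nf
  have e2 : b ^ (m - 2) * b ^ 2 = b ^ m := by
    rw [← rpow_two, ← rpow_add hb]; ring_nf
  have hc : (inner ℝ ξ η : ℝ) = (inner ℝ η ξ : ℝ) := real_inner_comm η ξ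
  have hin : (inner ℝ ((‖ξ‖ ^ (m - 2)) • ξ - (‖η‖ ^ (m - 2)) • η) (ξ - η) : ℝ)
      = a ^ m + b ^ m - (a ^ (m-2) + b ^ (m-2)) * (inner ℝ ξ η : ℝ) := by
    rw [inner_sub_left, inner_sub_right, inner_sub_right, real_inner_smul_left,
      real_inner_smul_left, real_inner_smul_left, real_inner_smul_left,
      real_inner_self_eq_norm_sq, real_inner_self_eq_norm_sq, ← hadef, ← hbdef]
    linear_combination e1 + e2 + b ^ (m-2) * hc
  have hX : ‖ξ - η‖ ^ 2 = a ^ 2 + b ^ 2 - 2 * (inner ℝ ξ η : ℝ) := by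
    rw [norm_sub_sq_real]; ring
  have key := simon_scalar_key hm1 hm2 ha hb (real_inner_le_norm ξ η)
  have hQ : (0:ℝ) < (a + b) ^ (2 - m) := rpow_pos_of_pos (by linarith) _
  have hPQ : (a + b) ^ (m - 2) * (a + b) ^ (2 - m) = 1 := by
    rw [← rpow_add (by linarith : (0:ℝ) < a + b)]
    norm_num
  have hX0 : (0:ℝ) ≤ a ^ 2 + b ^ 2 - 2 * (inner ℝ ξ η : ℝ) := by rw [← hX]; positivity
  have hA0 : (0:ℝ) ≤ (inner ℝ ((‖ξ‖ ^ (m - 2)) • ξ - (‖η‖ ^ (m - 2)) • η) (ξ - η) : ℝ) := by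
    rw [hin]
    refine le_trans ?_ key
    positivity
  set A : ℝ := (inner ℝ ((‖ξ‖ ^ (m - 2)) • ξ - (‖η‖ ^ (m - 2)) • η) (ξ - η) : ℝ) with hAdef
  have hXle : a ^ 2 + b ^ 2 - 2 * (inner ℝ ξ η : ℝ) ≤ (m-1)⁻¹ * A * (a + b) ^ (2 - m) := by
    rw [hin]
    have h5 := mul_le_mul_of_nonneg_right key
      (by positivity : (0:ℝ) ≤ (m-1)⁻¹ * (a + b) ^ (2 - m))
    calc a ^ 2 + b ^ 2 - 2 * (inner ℝ ξ η : ℝ)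
        = (a ^ 2 + b ^ 2 - 2 * (inner ℝ ξ η : ℝ)) * ((m - 1) * (m - 1)⁻¹)
            * ((a + b) ^ (m - 2) * (a + b) ^ (2 - m)) := by
          rw [mul_inv_cancel₀ hm1'.ne', hPQ, mul_one, mul_one]
      _ = (m - 1) * (a^2 + b^2 - 2*(inner ℝ ξ η : ℝ)) * (a + b) ^ (m - 2)
            * ((m-1)⁻¹ * (a + b) ^ (2 - m)) := by ring
      _ ≤ (a ^ m + b ^ m - (a ^ (m-2) + b ^ (m-2)) * (inner ℝ ξ η : ℝ))
            * ((m-1)⁻¹ * (a + b) ^ (2 - m)) := h5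
      _ = (m-1)⁻¹ * (a ^ m + b ^ m - (a ^ (m-2) + b ^ (m-2)) * (inner ℝ ξ η : ℝ))
            * (a + b) ^ (2 - m) := by ring
  have step1 : ‖ξ - η‖ ^ m = (a ^ 2 + b ^ 2 - 2 * (inner ℝ ξ η : ℝ)) ^ (m / 2) := by
    rw [← hX, ← rpow_natCast (‖ξ - η‖) 2, ← rpow_mul (norm_nonneg _),
      show ((2:ℕ):ℝ) * (m/2) = m by push_cast; ring]
  have step2 : (a ^ 2 + b ^ 2 - 2 * (inner ℝ ξ η : ℝ)) ^ (m / 2)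
      ≤ ((m-1)⁻¹ * A * (a + b) ^ (2 - m)) ^ (m / 2) :=
    rpow_le_rpow hX0 hXle (by positivity)
  have step3 : ((m-1)⁻¹ * A * (a + b) ^ (2 - m)) ^ (m / 2)
      = ((m-1)⁻¹) ^ (m/2) * A ^ (m/2) * ((a + b) ^ m) ^ ((2-m)/2) := by
    rw [mul_rpow (by positivity) hQ.le, mul_rpow (by positivity) hA0,
      ← rpow_mul (by linarith : (0:ℝ) ≤ a + b), ← rpow_mul (by linarith : (0:ℝ) ≤ a + b),
      show (2 - m) * (m / 2) = m * ((2 - m) / 2) by ring]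
  have step4 : ((a + b) ^ m) ^ ((2-m)/2) ≤ (2 ^ m) ^ ((2-m)/2) * (a^m + b^m) ^ ((2-m)/2) := by
    rw [← mul_rpow (by positivity) (by positivity)]
    exact rpow_le_rpow (by positivity)
      (simon_add_rpow_le (by linarith) ha.le hb.le) (by linarith)
  calc ‖ξ - η‖ ^ m = (a ^ 2 + b ^ 2 - 2 * (inner ℝ ξ η : ℝ)) ^ (m / 2) := step1
    _ ≤ ((m-1)⁻¹ * A * (a + b) ^ (2 - m)) ^ (m / 2) := step2
    _ = ((m-1)⁻¹) ^ (m/2) * A ^ (m/2) * ((a + b) ^ m) ^ ((2-m)/2) := step3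
    _ ≤ ((m-1)⁻¹) ^ (m/2) * A ^ (m/2) * ((2 ^ m) ^ ((2-m)/2) * (a^m + b^m) ^ ((2-m)/2)) := by
        apply mul_le_mul_of_nonneg_left step4
        have := rpow_nonneg hA0 (m/2)
        positivity
    _ = (((m-1)⁻¹) ^ (m/2) * (2 ^ m) ^ ((2-m)/2)) * A ^ (m/2) * (a^m + b^m) ^ ((2-m)/2) := by
        ring

theorem simon_subquadratic (N : ℕ) (m : ℝ) (hm1 : 1 < m) (hm2 : m < 2) :
    ∃ κ : ℝ, 0 < κ ∧ ∀ ξ η : EuclideanSpace ℝ (Fin N), (ξ ≠ 0 ∨ η ≠ 0) →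
      ‖ξ - η‖ ^ m ≤
        κ * (inner ℝ ((‖ξ‖ ^ (m - 2)) • ξ - (‖η‖ ^ (m - 2)) • η) (ξ - η) : ℝ) ^ (m / 2)
          * (‖ξ‖ ^ m + ‖η‖ ^ m) ^ ((2 - m) / 2) := by
  have hm1' : (0:ℝ) < m - 1 := by linarith
  refine ⟨((m-1)⁻¹) ^ (m/2) * (2 ^ m) ^ ((2-m)/2), ?_, ?_⟩
  · have h1 : (0:ℝ) < (m-1)⁻¹ := inv_pos.2 hm1'
    positivity
  have hκ : (1:ℝ) ≤ ((m-1)⁻¹) ^ (m/2) * (2 ^ m) ^ ((2-m)/2) := by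
    have hi : (1:ℝ) ≤ (m-1)⁻¹ := by
      rw [inv_eq_one_div, le_div_iff₀ hm1']; linarith
    have h1 : (1:ℝ) ≤ ((m-1)⁻¹) ^ (m/2) := by
      have := rpow_le_rpow zero_le_one hi (by positivity : (0:ℝ) ≤ m/2)
      rwa [one_rpow] at this
    have h2' : (1:ℝ) ≤ (2:ℝ) ^ m := by
      have := rpow_le_rpow zero_le_one (by norm_num : (1:ℝ) ≤ 2) (by positivity : (0:ℝ) ≤ m)
      rwa [one_rpow] at this
    have h2 : (1:ℝ) ≤ ((2:ℝ) ^ m) ^ ((2-m)/2) := by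
      have := rpow_le_rpow zero_le_one h2' (by linarith : (0:ℝ) ≤ (2-m)/2)
      rwa [one_rpow] at this
    nlinarith
  set κ : ℝ := ((m-1)⁻¹) ^ (m/2) * (2 ^ m) ^ ((2-m)/2) with hκdef
  intro ξ η hne
  by_cases hξ : ξ = 0
  · have hη : η ≠ 0 := by tauto
    subst hξ
    have hb : 0 < ‖η‖ := norm_pos_iff.2 hη
    set b := ‖η‖
    have hzm : (0:ℝ) ^ m = 0 := zero_rpow (by positivity)
    have hin : (inner ℝ ((‖(0:EuclideanSpace ℝ (Fin N))‖ ^ (m - 2)) • (0:EuclideanSpace ℝ (Fin N))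
          - (‖η‖ ^ (m - 2)) • η) ((0:EuclideanSpace ℝ (Fin N)) - η) : ℝ) = b ^ m := by
      rw [norm_zero, zero_rpow (sub_ne_zero.2 (by linarith)), zero_smul, zero_sub, zero_sub,
        inner_neg_neg, real_inner_smul_left, real_inner_self_eq_norm_sq, ← rpow_two,
        ← rpow_add hb]
      ring_nf
    rw [hin, norm_zero, hzm, zero_add, zero_sub, norm_neg]
    have hbm : (b ^ m) ^ (m / 2) * (b ^ m) ^ ((2 - m) / 2) = b ^ m := by
      rw [← rpow_add (rpow_pos_of_pos hb m), show m / 2 + (2 - m) / 2 = 1 by ring, rpow_one]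
    calc (b:ℝ) ^ m = 1 * ((b ^ m) ^ (m / 2) * (b ^ m) ^ ((2 - m) / 2)) := by rw [hbm, one_mul]
      _ ≤ κ * ((b ^ m) ^ (m / 2) * (b ^ m) ^ ((2 - m) / 2)) := by
          apply mul_le_mul_of_nonneg_right hκ
          have h1 := rpow_nonneg (rpow_nonneg hb.le m) (m/2)
          have h2 := rpow_nonneg (rpow_nonneg hb.le m) ((2-m)/2)
          positivity
      _ = κ * (b ^ m) ^ (m / 2) * (b ^ m) ^ ((2 - m) / 2) := by ring
  by_cases hη : η = 0
  · subst hη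
    have ha : 0 < ‖ξ‖ := norm_pos_iff.2 hξ
    set a := ‖ξ‖
    have hzm : (0:ℝ) ^ m = 0 := zero_rpow (by positivity)
    have hin : (inner ℝ ((‖ξ‖ ^ (m - 2)) • ξ
          - (‖(0:EuclideanSpace ℝ (Fin N))‖ ^ (m - 2)) • (0:EuclideanSpace ℝ (Fin N)))
          (ξ - (0:EuclideanSpace ℝ (Fin N))) : ℝ) = a ^ m := by
      rw [norm_zero, zero_rpow (sub_ne_zero.2 (by linarith)), zero_smul, sub_zero, sub_zero,
        real_inner_smul_left, real_inner_self_eq_norm_sq, ← rpow_two, ← rpow_add ha]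
      ring_nf
    rw [hin, norm_zero, hzm, add_zero, sub_zero]
    have ham : (a ^ m) ^ (m / 2) * (a ^ m) ^ ((2 - m) / 2) = a ^ m := by
      rw [← rpow_add (rpow_pos_of_pos ha m), show m / 2 + (2 - m) / 2 = 1 by ring, rpow_one]
    calc (a:ℝ) ^ m = 1 * ((a ^ m) ^ (m / 2) * (a ^ m) ^ ((2 - m) / 2)) := by rw [ham, one_mul]
      _ ≤ κ * ((a ^ m) ^ (m / 2) * (a ^ m) ^ ((2 - m) / 2)) := by
          apply mul_le_mul_of_nonneg_right hκ
          have h1 := rpow_nonneg (rpow_nonneg ha.le m) (m/2)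
          have h2 := rpow_nonneg (rpow_nonneg ha.le m) ((2-m)/2)
          positivity
      _ = κ * (a ^ m) ^ (m / 2) * (a ^ m) ^ ((2 - m) / 2) := by ring
  exact simon_main_case N m hm1 hm2 ξ η hξ hη
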